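/- Let n,d be coprime integers with 2 ≤ n < d, d ≡ -1 (mod n), and g = (n-1)(d-1)/2 ≥ 2. Then for every integer q ≥ 2, the quantity w = g(n+1)(d-7)/12 + g + (d-1)·∑_{j=0}^{n-1} frac(-((d+1)q + dj)/n)·j equals (n²-1)(d²-1)/24. -/

import Mathlib

lemma sum_sq_ico (N : ℕ) : ∑ j ∈ Finset.Ico (0:ℤ) (N:ℤ), ((j:ℚ))^2
    = ((N:ℚ) * ((N:ℚ)-1) * (2*(N:ℚ)-1))/6 := by
  induction N with
  | zero => simp
  | succ k ih =>
    have h : Finset.Ico (0:ℤ) ((k:ℕ)+1:ℕ) = insert (k:ℤ) (Finset.Ico (0:ℤ) (k:ℤ)) := by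
      ext x; simp [Finset.mem_Ico]
    rw [h, Finset.sum_insert (by simp), ih]
    push_cast
    ring

/-- For coprime `n, d` with `2 ≤ n < d`, `d ≡ -1 (mod n)`, `g = (n-1)(d-1)/2 ≥ 2`,
and any `q ≥ 2`, the `q`-weight formula
`g(n+1)(d-7)/12 + g + (d-1)·∑_{j=0}^{n-1} frac(-((d+1)q+dj)/n)·j`
equals `(n²-1)(d²-1)/24`. -/
theorem weight_d_equiv_neg_one (n d q g : ℤ) (hn : 2 ≤ n) (hnd : n < d)
    (hcop : Int.gcd n d = 1) (hmod : d ≡ -1 [ZMOD n]) (hq : 2 ≤ q)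
    (hg : 2 * g = (n - 1) * (d - 1)) (hg2 : 2 ≤ g) :
    (g : ℚ) * ((n : ℚ) + 1) * ((d : ℚ) - 7) / 12 + (g : ℚ)
      + ((d : ℚ) - 1) * ∑ j ∈ Finset.Ico (0 : ℤ) n,
          Int.fract (((-((d + 1) * q + d * j) : ℤ) : ℚ) / (n : ℚ)) * (j : ℚ)
      = ((n : ℚ) ^ 2 - 1) * ((d : ℚ) ^ 2 - 1) / 24 := by
  have hn0 : (0:ℚ) < (n:ℚ) := by exact_mod_cast (by linarith : (0:ℤ) < n)
  obtain ⟨m, hm⟩ : n ∣ d + 1 := by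
    have h1 := hmod.dvd
    have : n ∣ d - (-1) := (Int.ModEq.dvd hmod.symm)
    simpa [sub_neg_eq_add] using this
  have key : ∀ j ∈ Finset.Ico (0:ℤ) n,
      Int.fract (((-((d + 1) * q + d * j) : ℤ) : ℚ) / (n : ℚ)) * (j:ℚ)
        = (j:ℚ)^2 / n := by
    intro j hj
    simp only [Finset.mem_Ico] at hj
    have harg : (((-((d + 1) * q + d * j) : ℤ) : ℚ) / (n : ℚ))
        = (j:ℚ)/n - ((m*(q+j) : ℤ) : ℚ) := by
      have hd : (d:ℚ) = (n:ℚ)*(m:ℚ) - 1 := by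
        have h2 : d = n * m - 1 := by omega
        exact_mod_cast h2
      push_cast
      field_simp
      rw [hd]; ring
    rw [harg, Int.fract_sub_intCast, Int.fract_eq_self.mpr
      ⟨div_nonneg (by exact_mod_cast hj.1) hn0.le,
       (div_lt_one hn0).mpr (by exact_mod_cast hj.2)⟩]
    ring
  rw [Finset.sum_congr rfl key]
  obtain ⟨N, hN⟩ : ∃ N : ℕ, (N:ℤ) = n := ⟨n.toNat, Int.toNat_of_nonneg (by linarith)⟩
  subst hN
  rw [show (∑ j ∈ Finset.Ico (0:ℤ) (N:ℤ), (j:ℚ)^2 / ((N:ℤ):ℚ))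
      = (∑ j ∈ Finset.Ico (0:ℤ) (N:ℤ), (j:ℚ)^2) / ((N:ℤ):ℚ) from (Finset.sum_div _ _ _).symm,
    sum_sq_ico]
  have hgq : 2 * (g:ℚ) = ((N:ℚ) - 1) * ((d:ℚ) - 1) := by exact_mod_cast hg
  have hN0 : ((N:ℤ):ℚ) ≠ 0 := ne_of_gt hn0
  push_cast at hN0 ⊢
  rw [show (N:ℚ)*((N:ℚ)-1)*(2*(N:ℚ)-1)/6/(N:ℚ) = ((N:ℚ)-1)*(2*(N:ℚ)-1)/6 by
    field_simp]
  linear_combination (((N:ℚ)+1)*((d:ℚ)-7)+12)/24 * hgq
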